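/- Let f, g ∈ L^∞(∂D) be scalar symbols. If f̄ ∈ H^∞ or g ∈ H^∞, then T_f T_g = T_{fg} on H². Conversely (Brown–Halmos), if T_f T_g = T_{fg} then f̄ ∈ H^∞ or g ∈ H^∞. -/

import Mathlib

noncomputable section
open MeasureTheory Complex
open scoped InnerProductSpace ComplexConjugate

set_option synthInstance.maxHeartbeats 400000

namespace HardySpace

instance fact_two_pi_pos : Fact (0 < 2 * Real.pi) := ⟨by positivity⟩
abbrev 𝕋 : Type := AddCircle (2 * Real.pi)
abbrev μT : Measure 𝕋 := AddCircle.haarAddCircle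
abbrev L2 : Type := Lp ℂ 2 μT
def cw : 𝕋 → ℂ := fun x => fourier 1 x
def Hardy : Submodule ℂ L2 :=
  (Submodule.span ℂ (Set.range fun n : ℕ => (fourierLp 2 (n : ℤ) : L2))).topologicalClosure
instance : CompleteSpace Hardy :=
  (Submodule.isClosed_topologicalClosure _).isComplete.completeSpace_coe
def Pfull : L2 →L[ℂ] L2 := Hardy.subtypeL.comp (Submodule.orthogonalProjectionOnto Hardy)

open Classical in
/-- The element of `L²` determined by an essentially bounded symbol
(junk value `0` if the function is not essentially bounded). -/
def symbolL2 (g : 𝕋 → ℂ) : L2 :=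
  if hg : MemLp g ⊤ μT then (hg.mono_exponent le_top).toLp g else 0

/-- `g ∈ H^∞`: `g` is essentially bounded and lies in the Hardy space. -/
def InHinf (g : 𝕋 → ℂ) : Prop := MemLp g ⊤ μT ∧ symbolL2 g ∈ Hardy

theorem memMul {f : 𝕋 → ℂ} (hf : MemLp f ⊤ μT) (h : L2) :
    MemLp (fun x => f x * h x) 2 μT := by
  refine ⟨hf.aestronglyMeasurable.mul (Lp.aestronglyMeasurable h), ?_⟩
  have hle := eLpNorm_le_eLpNorm_top_mul_eLpNorm 2 f (Lp.aestronglyMeasurable h)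
    (· * ·) 1 (Filter.Eventually.of_forall fun x => by simp [nnnorm_mul])
  simp only [ENNReal.coe_one, one_mul] at hle
  refine lt_of_le_of_lt hle ?_
  exact ENNReal.mul_lt_top hf.2 (Lp.memLp h).2

open Classical in
/-- Multiplication by an `L^∞` symbol, as a bounded operator on `L²`
(defined to be `0` for symbols that are not essentially bounded). -/
def mulCLM (f : 𝕋 → ℂ) : L2 →L[ℂ] L2 :=
  if hf : MemLp f ⊤ μT then
    LinearMap.mkContinuousOfExistsBound
      { toFun := fun h => (memMul hf h).toLp (fun x => f x * h x)
        map_add' := fun h k => by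
          rw [← MemLp.toLp_add]
          apply MemLp.toLp_congr
          filter_upwards [AEEqFun.coeFn_add (h : 𝕋 →ₘ[μT] ℂ) (k : 𝕋 →ₘ[μT] ℂ)] with x hx
          simp only [show ((h + k : L2) : 𝕋 →ₘ[μT] ℂ) = (h : 𝕋 →ₘ[μT] ℂ) + (k : 𝕋 →ₘ[μT] ℂ)
            from rfl, hx, Pi.add_apply]
          ring
        map_smul' := fun c h => by
          simp only [RingHom.id_apply]
          rw [← MemLp.toLp_const_smul]
          apply MemLp.toLp_congr
          filter_upwards [AEEqFun.coeFn_smul c (h : 𝕋 →ₘ[μT] ℂ)] with x hx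
          simp only [show ((c • h : L2) : 𝕋 →ₘ[μT] ℂ) = c • (h : 𝕋 →ₘ[μT] ℂ) from rfl, hx,
            Pi.smul_apply, smul_eq_mul]
          ring }
      ⟨(eLpNorm f ⊤ μT).toReal, fun h => by
        simp only [LinearMap.coe_mk, AddHom.coe_mk]
        rw [Lp.norm_toLp, Lp.norm_def]
        rw [← ENNReal.toReal_mul]
        refine ENNReal.toReal_mono ?_ ?_
        · exact ENNReal.mul_ne_top hf.2.ne (Lp.memLp h).2.ne
        · simpa using eLpNorm_le_eLpNorm_top_mul_eLpNorm 2 f (Lp.aestronglyMeasurable h)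
            (· * ·) 1 (Filter.Eventually.of_forall fun x => by simp [nnnorm_mul])⟩
  else 0

theorem continuous_cw : Continuous cw := map_continuous (fourier 1)

theorem norm_cw (x : 𝕋) : ‖cw x‖ = 1 := by
  rw [cw, fourier_apply]
  exact Circle.norm_coe _

theorem memVop (h : L2) : MemLp (fun x => conj (cw x) * conj (h x)) 2 μT := by
  refine MemLp.of_le_mul (c := 1) (Lp.memLp h)
    ((continuous_cw.star.aestronglyMeasurable).mul
      (continuous_star.comp_aestronglyMeasurable (Lp.aestronglyMeasurable h)))
    (Filter.Eventually.of_forall fun x => ?_)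
  simp [norm_cw x]

/-- The antiunitary operator `V` on `L²(∂D)` given by `(V h)(w) = conj(w) ⬝ conj(h(w))`. -/
def Vop (h : L2) : L2 := (memVop h).toLp _

/-- The Toeplitz operator `T_f h = P (f h)` on `H²`. -/
def Toeplitz (f : 𝕋 → ℂ) : Hardy →L[ℂ] Hardy :=
  (Submodule.orthogonalProjectionOnto Hardy).comp ((mulCLM f).comp Hardy.subtypeL)

/-- The Hankel operator `H_f h = (I − P)(f h)`, from `H²` into `L²` (with range in `L² ⊖ H²`). -/
def Hankel (f : 𝕋 → ℂ) : Hardy →L[ℂ] L2 :=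
  (ContinuousLinearMap.id ℂ L2 - Pfull).comp ((mulCLM f).comp Hardy.subtypeL)

/-- The Möbius map `φ_z`, viewed as a function on the circle. -/
def phiC (z : ℂ) : 𝕋 → ℂ := fun x => (z - cw x) / (1 - conj z * cw x)

/-- The normalized reproducing kernel `k_z` as a function on the circle. -/
def kfun (z : ℂ) : 𝕋 → ℂ := fun x => (Real.sqrt (1 - ‖z‖ ^ 2) : ℂ) / (1 - conj z * cw x)

/-- The normalized reproducing kernel `k_z` as an element of `L²`. -/
def kz (z : ℂ) : L2 := symbolL2 (kfun z)

/-- The normalized reproducing kernel `k_z` as an element of the Hardy space `H²`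
(for `|z| < 1`, `k_z` lies in `H²`, so this is just `k_z`). -/
def kzH (z : ℂ) : Hardy := Submodule.orthogonalProjectionOnto Hardy (kz z)

/-- The antianalytic part `f₋ = (I − P) f` of a bounded symbol, as a function. -/
def minusPart (f : 𝕋 → ℂ) : 𝕋 → ℂ := (symbolL2 f - Pfull (symbolL2 f) : L2)

/-- The harmonic (Poisson) extension of `h ∈ L¹(∂D)` at `z ∈ D`:
`h(z) = ∫ h(w) (1 − |z|²)/|1 − w z̄|² dσ(w)`. -/
def poisson (h : 𝕋 → ℂ) (z : ℂ) : ℂ :=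
  ∫ x, h x * (((1 - ‖z‖ ^ 2) / ‖1 - cw x * conj z‖ ^ 2 : ℝ) : ℂ) ∂μT

/-- The Poisson extension of a real-valued function. -/
def poissonR (h : 𝕋 → ℝ) (z : ℂ) : ℝ :=
  ∫ x, h x * ((1 - ‖z‖ ^ 2) / ‖1 - cw x * conj z‖ ^ 2) ∂μT

open Classical in
/-- The Möbius map `φ_z` viewed as a self-map of the circle `∂D` (for `|z| < 1`,
`φ_z` maps the circle to itself). -/
def phiT (z : ℂ) : 𝕋 → 𝕋 := fun x =>
  if h : ‖phiC z x‖ = 1 then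
    AddCircle.homeomorphCircle'.symm ⟨phiC z x, mem_sphere_zero_iff_norm.2 h⟩
  else x

/-- `H²(ℂⁿ) = H² ⊕ ⋯ ⊕ H²`. -/
abbrev HardyN (n : ℕ) := PiLp 2 (fun _ : Fin n => Hardy)
/-- `L²(ℂⁿ) = L² ⊕ ⋯ ⊕ L²`. -/
abbrev L2N (n : ℕ) := PiLp 2 (fun _ : Fin n => L2)

instance {n : ℕ} : CompleteSpace (HardyN n) :=
  inferInstance
instance {n : ℕ} : CompleteSpace (L2N n) :=
  inferInstance

/-- The operator `(Fin n × Fin n)`-matrix of operators acting on direct sums. -/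
def matrixCLM {n : ℕ} {A B : Type*} [NormedAddCommGroup A] [NormedAddCommGroup B]
    [NormedSpace ℂ A] [NormedSpace ℂ B] (T : Fin n → Fin n → (A →L[ℂ] B)) :
    (PiLp 2 fun _ : Fin n => A) →L[ℂ] (PiLp 2 fun _ : Fin n => B) :=
  ((PiLp.continuousLinearEquiv 2 ℂ (fun _ : Fin n => B)).symm.toContinuousLinearMap.comp
    (ContinuousLinearMap.pi fun i => ∑ j, (T i j).comp (ContinuousLinearMap.proj j))).comp
    (PiLp.continuousLinearEquiv 2 ℂ (fun _ : Fin n => A)).toContinuousLinearMap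

/-- The block Toeplitz operator `T_F` on `H²(ℂⁿ)`, given by the operator matrix `(T_{f_ij})`. -/
def blockToeplitz {n : ℕ} (F : Fin n → Fin n → 𝕋 → ℂ) : HardyN n →L[ℂ] HardyN n :=
  matrixCLM fun i j => Toeplitz (F i j)

/-- The block Hankel operator `H_F` from `H²(ℂⁿ)` to `L²(ℂⁿ)`, given by the
operator matrix `(H_{f_ij})`. -/
def blockHankel {n : ℕ} (F : Fin n → Fin n → 𝕋 → ℂ) : HardyN n →L[ℂ] L2N n :=
  matrixCLM fun i j => Hankel (F i j)

/-- Pointwise product of matrix symbols. -/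
def symMul {n : ℕ} (F G : Fin n → Fin n → 𝕋 → ℂ) : Fin n → Fin n → 𝕋 → ℂ :=
  fun i j x => ∑ k, F i k x * G k j x

/-- Pointwise conjugate transpose `F*` of a matrix symbol. -/
def symStar {n : ℕ} (F : Fin n → Fin n → 𝕋 → ℂ) : Fin n → Fin n → 𝕋 → ℂ :=
  fun i j x => conj (F j i x)

/-- The rank-one operator `x ⊗ y` given by `(x ⊗ y) f = ⟨f, y⟩ x`, where the inner
product `⟨·,·⟩` is linear in the first argument. -/
def rankOne {E F : Type*} [NormedAddCommGroup E] [InnerProductSpace ℂ E]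
    [NormedAddCommGroup F] [InnerProductSpace ℂ F] (x : F) (y : E) : E →L[ℂ] F :=
  (innerSL ℂ y).smulRight x

/-! ### Auxiliary lemmas for Brown–Halmos -/

section BrownHalmosAux

theorem memLp_top_mul {f g : 𝕋 → ℂ} (hf : MemLp f ⊤ μT) (hg : MemLp g ⊤ μT) :
    MemLp (fun x => f x * g x) ⊤ μT := by
  refine ⟨hf.aestronglyMeasurable.mul hg.aestronglyMeasurable, ?_⟩
  have hle := eLpNorm_le_eLpNorm_top_mul_eLpNorm ⊤ f hg.aestronglyMeasurable
    (· * ·) 1 (Filter.Eventually.of_forall fun x => by simp [nnnorm_mul])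
  simp only [ENNReal.coe_one, one_mul] at hle
  refine lt_of_le_of_lt hle ?_
  exact ENNReal.mul_lt_top hf.2 hg.2

theorem memLp_fourier (n : ℤ) : MemLp (fun x : 𝕋 => fourier n x) ⊤ μT := by
  refine memLp_top_of_bound (Continuous.aestronglyMeasurable (map_continuous _)) 1
    (Filter.Eventually.of_forall fun x => ?_)
  rw [fourier_apply]
  exact le_of_eq (Circle.norm_coe _)

theorem memLp_conj {f : 𝕋 → ℂ} (hf : MemLp f ⊤ μT) :
    MemLp (fun x => conj (f x)) ⊤ μT := by
  refine ⟨RCLike.continuous_conj.comp_aestronglyMeasurable hf.1, ?_⟩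
  have : eLpNorm (fun x => conj (f x)) ⊤ μT = eLpNorm f ⊤ μT := by
    apply eLpNorm_congr_norm_ae
    exact Filter.Eventually.of_forall fun x => by simp
  rw [this]; exact hf.2

theorem coeFn_mulCLM {f : 𝕋 → ℂ} (hf : MemLp f ⊤ μT) (h : L2) :
    (mulCLM f h : 𝕋 → ℂ) =ᵐ[μT] fun x => f x * h x := by
  simp only [mulCLM, dif_pos hf]
  exact MemLp.coeFn_toLp (memMul hf h)

theorem coeFn_symbolL2 {g : 𝕋 → ℂ} (hg : MemLp g ⊤ μT) :
    (symbolL2 g : 𝕋 → ℂ) =ᵐ[μT] g := by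
  simp only [symbolL2, dif_pos hg]
  exact MemLp.coeFn_toLp _

theorem fourierCoeff_congr {f g : 𝕋 → ℂ} (h : f =ᵐ[μT] g) (n : ℤ) :
    fourierCoeff f n = fourierCoeff g n := by
  unfold fourierCoeff
  exact integral_congr_ae (h.mono fun x hx => by
    show fourier (-n) x • f x = fourier (-n) x • g x
    rw [hx])

theorem inner_fourierLp (n : ℤ) (h : L2) :
    ⟪(fourierLp 2 n : L2), h⟫_ℂ = fourierCoeff (h : 𝕋 → ℂ) n := by
  rw [← fourierBasis_repr, fourierBasis.repr_apply_apply, coe_fourierBasis]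

theorem fourierCoeff_mul_fourier (p : 𝕋 → ℂ) (m n : ℤ) :
    fourierCoeff (fun x => p x * fourier m x) n = fourierCoeff p (n - m) := by
  unfold fourierCoeff
  refine integral_congr_ae (Filter.Eventually.of_forall fun x => ?_)
  simp only [smul_eq_mul]
  rw [show -(n - m) = -n + m by ring, fourier_add]
  ring

theorem fourierCoeff_conj (p : 𝕋 → ℂ) (n : ℤ) :
    fourierCoeff (fun x => conj (p x)) n = conj (fourierCoeff p (-n)) := by
  unfold fourierCoeff
  rw [← integral_conj]
  refine integral_congr_ae (Filter.Eventually.of_forall fun x => ?_)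
  simp only [smul_eq_mul, neg_neg, map_mul, ← fourier_neg]

theorem fourierLp_mem_Hardy (n : ℕ) : (fourierLp 2 (n : ℤ) : L2) ∈ Hardy :=
  Submodule.le_topologicalClosure _ (Submodule.subset_span ⟨n, rfl⟩)

theorem coeff_eq_zero_of_mem_Hardy {h : L2} (hh : h ∈ Hardy) {n : ℤ} (hn : n < 0) :
    fourierCoeff (h : 𝕋 → ℂ) n = 0 := by
  have hker : Hardy ≤ LinearMap.ker (innerSL ℂ (fourierLp 2 n : L2) : L2 →ₗ[ℂ] ℂ) := by
    refine Submodule.topologicalClosure_minimal _ (Submodule.span_le.2 ?_)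
      (ContinuousLinearMap.isClosed_ker _)
    rintro - ⟨k, rfl⟩
    have : ⟪(fourierLp 2 n : L2), (fourierLp 2 (k : ℤ) : L2)⟫_ℂ = 0 :=
      orthonormal_fourier.2 (by omega)
    simpa [LinearMap.mem_ker] using this
  have := hker hh
  rw [LinearMap.mem_ker] at this
  rw [← inner_fourierLp]
  simpa using this

theorem mem_Hardy_of_coeff {h : L2}
    (hc : ∀ n : ℤ, n < 0 → fourierCoeff (h : 𝕋 → ℂ) n = 0) : h ∈ Hardy := by
  have hcl : IsClosed (Hardy : Set L2) := Submodule.isClosed_topologicalClosure _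
  refine hcl.mem_of_tendsto (hasSum_fourier_series_L2 h)
    (Filter.Eventually.of_forall fun s => ?_)
  refine Submodule.sum_mem _ fun i _ => ?_
  rcases lt_or_ge i 0 with hi | hi
  · simp [hc i hi]
  · obtain ⟨m, rfl⟩ := Int.eq_ofNat_of_zero_le hi
    exact Submodule.smul_mem _ _ (fourierLp_mem_Hardy m)

theorem hasSum_coeff_mul {f : 𝕋 → ℂ} (hf : MemLp f ⊤ μT) (w : L2) (n : ℤ) :
    HasSum (fun k : ℤ => fourierCoeff f (n - k) * fourierCoeff (w : 𝕋 → ℂ) k)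
      (fourierCoeff (fun x => f x * w x) n) := by
  have hum : MemLp (fun x => conj (f x) * fourier n x) ⊤ μT :=
    memLp_top_mul (memLp_conj hf) (memLp_fourier n)
  set u : L2 := symbolL2 (fun x => conj (f x) * fourier n x) with hu
  have h1 : ⟪u, w⟫_ℂ = fourierCoeff (fun x => f x * w x) n := by
    rw [MeasureTheory.L2.inner_def]
    unfold fourierCoeff
    refine integral_congr_ae ?_
    filter_upwards [coeFn_symbolL2 hum] with x hx
    rw [RCLike.inner_apply, hx]
    simp only [smul_eq_mul, map_mul, Complex.conj_conj, ← fourier_neg]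
    ring
  have h3 : ∀ k : ℤ, ⟪u, (fourierBasis k : L2)⟫_ℂ * ⟪(fourierBasis k : L2), w⟫_ℂ
      = fourierCoeff f (n - k) * fourierCoeff (w : 𝕋 → ℂ) k := by
    intro k
    have hb : (fourierBasis k : L2) = (fourierLp 2 k : L2) := by rw [coe_fourierBasis]
    rw [hb, inner_fourierLp, ← inner_conj_symm, inner_fourierLp]
    congr 1
    rw [fourierCoeff_congr (coeFn_symbolL2 hum), fourierCoeff_mul_fourier,
      fourierCoeff_conj, Complex.conj_conj, show -(k - n) = n - k by ring]
  have h2 := fourierBasis.hasSum_inner_mul_inner u w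
  rw [h1] at h2
  simpa only [h3] using h2

theorem mulCLM_mem_Hardy {g : 𝕋 → ℂ} (hg : InHinf g) {h : L2} (hh : h ∈ Hardy) :
    mulCLM g h ∈ Hardy := by
  apply mem_Hardy_of_coeff
  intro n hn
  have hs := hasSum_coeff_mul hg.1 h n
  have h0 : ∀ k : ℤ, fourierCoeff g (n - k) * fourierCoeff (h : 𝕋 → ℂ) k = 0 := by
    intro k
    rcases lt_or_ge k 0 with hk | hk
    · rw [coeff_eq_zero_of_mem_Hardy hh hk, mul_zero]
    · have hz : fourierCoeff g (n - k) = 0 := by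
        have := coeff_eq_zero_of_mem_Hardy hg.2 (show n - k < 0 by omega)
        rwa [fourierCoeff_congr (coeFn_symbolL2 hg.1)] at this
      rw [hz, zero_mul]
  rw [show (fun k : ℤ => fourierCoeff g (n - k) * fourierCoeff (h : 𝕋 → ℂ) k)
      = fun _ => (0 : ℂ) from funext h0] at hs
  rw [fourierCoeff_congr (coeFn_mulCLM hg.1 h)]
  exact hs.unique hasSum_zero

theorem mulCLM_mul {f g : 𝕋 → ℂ} (hf : MemLp f ⊤ μT) (hg : MemLp g ⊤ μT) (x : L2) :
    mulCLM f (mulCLM g x) = mulCLM (fun y => f y * g y) x := by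
  apply Lp.ext
  filter_upwards [coeFn_mulCLM hf (mulCLM g x), coeFn_mulCLM hg x,
    coeFn_mulCLM (memLp_top_mul hf hg) x] with y h1 h2 h3
  rw [h1, h2, h3, mul_assoc]

theorem inner_mulCLM_adj {f : 𝕋 → ℂ} (hf : MemLp f ⊤ μT) (v u : L2) :
    ⟪v, mulCLM f u⟫_ℂ = ⟪mulCLM (fun x => conj (f x)) v, u⟫_ℂ := by
  rw [MeasureTheory.L2.inner_def, MeasureTheory.L2.inner_def]
  refine integral_congr_ae ?_
  filter_upwards [coeFn_mulCLM hf u, coeFn_mulCLM (memLp_conj hf) v] with x h1 h2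
  rw [RCLike.inner_apply, RCLike.inner_apply, h1, h2]
  simp only [map_mul, Complex.conj_conj]
  ring

theorem toeplitz_comp_of_analytic {f g : 𝕋 → ℂ} (hf : MemLp f ⊤ μT) (hg : InHinf g) :
    (Toeplitz f).comp (Toeplitz g) = Toeplitz fun x => f x * g x := by
  ext h
  simp only [Toeplitz, ContinuousLinearMap.comp_apply, Submodule.subtypeL_apply]
  rw [show ((Submodule.orthogonalProjectionOnto Hardy (mulCLM g (h : L2)) : Hardy) : L2)
      = mulCLM g (h : L2) from Submodule.starProjection_eq_self_iff.mpr (mulCLM_mem_Hardy hg h.2),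
    mulCLM_mul hf hg.1]

theorem toeplitz_comp_of_coanalytic {f g : 𝕋 → ℂ}
    (hf : InHinf fun x => conj (f x)) (hg : MemLp g ⊤ μT) :
    (Toeplitz f).comp (Toeplitz g) = Toeplitz fun x => f x * g x := by
  have hfm : MemLp f ⊤ μT := by
    have := memLp_conj hf.1
    simpa using this
  ext h
  simp only [Toeplitz, ContinuousLinearMap.comp_apply, Submodule.subtypeL_apply]
  set y : L2 := mulCLM g (h : L2) with hy
  set u : L2 := y - (Submodule.orthogonalProjectionOnto Hardy y : L2) with hud
  have hperp : mulCLM f u ∈ Hardyᗮ := by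
    rw [Submodule.mem_orthogonal]
    intro v hv
    rw [inner_mulCLM_adj hfm]
    exact (Submodule.mem_orthogonal Hardy u).1
      (Hardy.sub_starProjection_mem_orthogonal y) _ (mulCLM_mem_Hardy hf hv)
  have hsplit : mulCLM f y = mulCLM f u + mulCLM f (Submodule.orthogonalProjectionOnto Hardy y : L2) := by
    rw [← map_add]
    congr 1
    rw [hud, sub_add_cancel]
  rw [← mulCLM_mul hfm hg, hsplit, map_add,
    Submodule.orthogonalProjectionOnto_eq_zero_iff.mpr hperp, zero_add]

/-- The basis vectors of the Hardy space. -/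
def eH (n : ℕ) : Hardy := ⟨(fourierLp 2 (n : ℤ) : L2), fourierLp_mem_Hardy n⟩

theorem inner_eH_toeplitz {p : 𝕋 → ℂ} (hp : MemLp p ⊤ μT) (i : ℕ) (w : Hardy) :
    ⟪eH i, Toeplitz p w⟫_ℂ = fourierCoeff (fun x => p x * (w : L2) x) i := by
  simp only [Toeplitz, ContinuousLinearMap.comp_apply, Submodule.subtypeL_apply]
  rw [Submodule.inner_orthogonalProjectionOnto_eq_of_mem_left]
  show ⟪((eH i : Hardy) : L2), mulCLM p (w : L2)⟫_ℂ = _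
  rw [show ((eH i : Hardy) : L2) = (fourierLp 2 (i : ℤ) : L2) from rfl, inner_fourierLp]
  exact fourierCoeff_congr (coeFn_mulCLM hp _) _

theorem coeff_toeplitz_apply {g : 𝕋 → ℂ} (hg : MemLp g ⊤ μT) (j : ℕ) (k : ℤ) (hk : 0 ≤ k) :
    fourierCoeff ((Toeplitz g (eH j) : L2) : 𝕋 → ℂ) k
      = fourierCoeff (fun x => g x * fourier (j : ℤ) x) k := by
  obtain ⟨m, rfl⟩ := Int.eq_ofNat_of_zero_le hk
  rw [← inner_fourierLp]
  have : ⟪(fourierLp 2 (m : ℤ) : L2), ((Toeplitz g (eH j) : Hardy) : L2)⟫_ℂ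
      = ⟪eH m, Toeplitz g (eH j)⟫_ℂ := rfl
  rw [this, inner_eH_toeplitz hg]
  refine fourierCoeff_congr ?_ _
  filter_upwards [coeFn_fourierLp 2 (j : ℤ)] with x hx
  exact congrArg (fun t => g x * t) hx

end BrownHalmosAux

/-- Brown–Halmos: for scalar symbols `f, g ∈ L^∞`, `T_f T_g = T_{fg}` if and only if
`f̄ ∈ H^∞` or `g ∈ H^∞`. -/
theorem toeplitz_comp_eq_iff (f g : 𝕋 → ℂ) (hf : MemLp f ⊤ μT) (hg : MemLp g ⊤ μT) :
    (InHinf (fun x => conj (f x)) ∨ InHinf g) ↔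
      (Toeplitz f).comp (Toeplitz g) = Toeplitz fun x => f x * g x := by
  constructor
  · rintro (hfa | hga)
    · exact toeplitz_comp_of_coanalytic hfa hg
    · exact toeplitz_comp_of_analytic hf hga
  · intro heq
    have key : ∀ i j : ℕ, HasSum
        (fun m : ℕ => fourierCoeff f ((i : ℤ) + m + 1) * fourierCoeff g (-(j : ℤ) - m - 1))
        0 := by
      intro i j
      set w : L2 := ((Toeplitz g) (eH j) : L2) with hw
      have hwH : w ∈ Hardy := SetLike.coe_mem _
      have hy : ∀ k : ℤ,
          fourierCoeff ((mulCLM g (fourierLp 2 (j : ℤ) : L2)) : 𝕋 → ℂ) k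
            = fourierCoeff g (k - j) := by
        intro k
        rw [fourierCoeff_congr (coeFn_mulCLM hg _)]
        have h5 : fourierCoeff (fun x => g x * ((fourierLp 2 (j : ℤ) : L2) : 𝕋 → ℂ) x) k
            = fourierCoeff (fun x => g x * fourier (j : ℤ) x) k := by
          refine fourierCoeff_congr ?_ _
          filter_upwards [coeFn_fourierLp 2 (j : ℤ)] with x hx
          exact congrArg (fun t => g x * t) hx
        rw [h5, fourierCoeff_mul_fourier]
      have hA := hasSum_coeff_mul hf (mulCLM g (fourierLp 2 (j : ℤ) : L2)) i
      have hB := hasSum_coeff_mul hf w i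
      have hvals :
          fourierCoeff (fun x => f x * ((mulCLM g (fourierLp 2 (j : ℤ) : L2)) : 𝕋 → ℂ) x) i
            = fourierCoeff (fun x => f x * (w : 𝕋 → ℂ) x) i := by
        have e1 : fourierCoeff (fun x => f x * (w : 𝕋 → ℂ) x) (i : ℤ)
            = ⟪eH i, Toeplitz f (Toeplitz g (eH j))⟫_ℂ := (inner_eH_toeplitz hf i _).symm
        have e2 : fourierCoeff (fun x => (f x * g x) * fourier (j : ℤ) x) (i : ℤ)
            = ⟪eH i, Toeplitz (fun x => f x * g x) (eH j)⟫_ℂ := by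
          rw [inner_eH_toeplitz (memLp_top_mul hf hg) i (eH j)]
          refine (fourierCoeff_congr ?_ _).symm
          filter_upwards [coeFn_fourierLp 2 (j : ℤ)] with x hx
          exact congrArg (fun t => (f x * g x) * t) hx
        have e3 :
            fourierCoeff (fun x => f x * ((mulCLM g (fourierLp 2 (j : ℤ) : L2)) : 𝕋 → ℂ) x) i
              = fourierCoeff (fun x => (f x * g x) * fourier (j : ℤ) x) (i : ℤ) := by
          refine fourierCoeff_congr ?_ _
          filter_upwards [coeFn_mulCLM hg (fourierLp 2 (j : ℤ) : L2),
            coeFn_fourierLp 2 (j : ℤ)] with x h1 h2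
          rw [h1, h2, mul_assoc]
        rw [e3, e2, e1, ← ContinuousLinearMap.comp_apply, heq]
      rw [hvals] at hA
      have hd := hA.sub hB
      rw [sub_self] at hd
      have hrange : ∀ k : ℤ, k ∉ Set.range Int.negSucc →
          (fourierCoeff f ((i : ℤ) - k)
              * fourierCoeff ((mulCLM g (fourierLp 2 (j : ℤ) : L2)) : 𝕋 → ℂ) k
            - fourierCoeff f ((i : ℤ) - k) * fourierCoeff (w : 𝕋 → ℂ) k) = 0 := by
        intro k hk
        have hk0 : 0 ≤ k := by
          by_contra hneg
          push_neg at hneg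
          exact hk ⟨(-k - 1).toNat, by rw [Int.negSucc_eq]; omega⟩
        rw [hy k, hw, coeff_toeplitz_apply hg j k hk0, fourierCoeff_mul_fourier, sub_self]
      have hinj : Function.Injective Int.negSucc := @Int.negSucc.inj
      have hns := (Function.Injective.hasSum_iff hinj hrange).2 hd
      have hfun : ((fun k : ℤ =>
            fourierCoeff f ((i : ℤ) - k)
                * fourierCoeff ((mulCLM g (fourierLp 2 (j : ℤ) : L2)) : 𝕋 → ℂ) k
              - fourierCoeff f ((i : ℤ) - k) * fourierCoeff (w : 𝕋 → ℂ) k) ∘ Int.negSucc)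
          = fun m : ℕ =>
              fourierCoeff f ((i : ℤ) + m + 1) * fourierCoeff g (-(j : ℤ) - m - 1) := by
        funext m
        simp only [Function.comp_apply]
        rw [hy, coeff_eq_zero_of_mem_Hardy hwH (by rw [Int.negSucc_eq]; omega),
          mul_zero, sub_zero, Int.negSucc_eq,
          show (i : ℤ) - (-((m : ℤ) + 1)) = (i : ℤ) + m + 1 by ring,
          show (-((m : ℤ) + 1)) - (j : ℤ) = -(j : ℤ) - m - 1 by ring]
      rw [hfun] at hns
      exact hns
    have prod0 : ∀ i j : ℕ,
        fourierCoeff f ((i : ℤ) + 1) * fourierCoeff g (-(j : ℤ) - 1) = 0 := by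
      intro i j
      have h1 := key i j
      have h2 := key (i + 1) (j + 1)
      have hsum := h1.tsum_eq
      rw [Summable.tsum_eq_zero_add h1.summable] at hsum
      have htail : (fun m : ℕ =>
            fourierCoeff f ((i : ℤ) + (↑(m + 1) : ℤ) + 1)
              * fourierCoeff g (-(j : ℤ) - (↑(m + 1) : ℤ) - 1))
          = fun m : ℕ =>
            fourierCoeff f (((i + 1 : ℕ) : ℤ) + m + 1)
              * fourierCoeff g (-((j + 1 : ℕ) : ℤ) - m - 1) := by
        funext m
        rw [show ((i : ℤ) + (↑(m + 1) : ℤ) + 1) = (((i + 1 : ℕ) : ℤ) + m + 1) by push_cast; ring,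
          show (-(j : ℤ) - (↑(m + 1) : ℤ) - 1) = (-((j + 1 : ℕ) : ℤ) - m - 1) by push_cast; ring]
      rw [htail, h2.tsum_eq, add_zero] at hsum
      simpa using hsum.symm
    by_cases hgz : ∀ j : ℕ, fourierCoeff g (-(j : ℤ) - 1) = 0
    · right
      refine ⟨hg, mem_Hardy_of_coeff fun n hn => ?_⟩
      rw [fourierCoeff_congr (coeFn_symbolL2 hg)]
      have h6 := hgz (-n - 1).toNat
      rwa [show -(((-n - 1).toNat : ℕ) : ℤ) - 1 = n by omega] at h6
    · left
      push_neg at hgz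
      obtain ⟨j0, hj0⟩ := hgz
      have hFz : ∀ i : ℕ, fourierCoeff f ((i : ℤ) + 1) = 0 := fun i => by
        rcases mul_eq_zero.1 (prod0 i j0) with h | h
        · exact h
        · exact absurd h hj0
      refine ⟨memLp_conj hf, mem_Hardy_of_coeff fun n hn => ?_⟩
      rw [fourierCoeff_congr (coeFn_symbolL2 (memLp_conj hf)), fourierCoeff_conj]
      have h7 := hFz (-n - 1).toNat
      rw [show ((((-n - 1).toNat : ℕ) : ℤ) + 1) = -n by omega] at h7
      rw [h7, map_zero]

end HardySpace
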